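/- arXiv:1712.09529 — 2 statements merged into one kernel-verified Lean document; each statement's English description precedes it below -/
import Mathlib

section
/- There is no strictly Deza graph Γ with parameters (n, k, b, a) such that k = b + 1, β(v) > 1 for every vertex v, and every vertex of Γ is of type (B). -/
open Finset SimpleGraph

universe u v

/-- The number of common neighbours of two vertices. -/
def commonNbrs {V : Type u} [Fintype V] [DecidableEq V] (G : SimpleGraph V)
    [DecidableRel G.Adj] (x y : V) : ℕ :=
  (G.neighborFinset x ∩ G.neighborFinset y).card

/-- `G` is a Deza graph with parameters `(n, k, b, a)`: a nonempty `k`-regular graph on `n`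
vertices in which any two distinct vertices have either `b` or `a` common neighbours,
where `b ≥ a`. -/
def IsDezaGraph {V : Type u} [Fintype V] [DecidableEq V] (G : SimpleGraph V)
    [DecidableRel G.Adj] (n k b a : ℕ) : Prop :=
  G ≠ ⊥ ∧ Fintype.card V = n ∧ G.IsRegularOfDegree k ∧ a ≤ b ∧
    ∀ x y : V, x ≠ y → commonNbrs G x y = b ∨ commonNbrs G x y = a

/-- `G` is a strictly Deza graph with parameters `(n, k, b, a)`: a Deza graph of
diameter 2 that is not strongly regular. -/
def IsStrictlyDezaGraph {V : Type u} [Fintype V] [DecidableEq V] (G : SimpleGraph V)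
    [DecidableRel G.Adj] (n k b a : ℕ) : Prop :=
  IsDezaGraph G n k b a ∧ G.Connected ∧ (∀ x y : V, G.dist x y ≤ 2) ∧
    (∃ x y : V, G.dist x y = 2) ∧ ¬ ∃ ℓ μ : ℕ, G.IsSRGWith n k ℓ μ

/-- `B(v)`: the set of vertices `u ≠ v` having exactly `b` common neighbours with `v`. -/
def dezaB {V : Type u} [Fintype V] [DecidableEq V] (G : SimpleGraph V)
    [DecidableRel G.Adj] (b : ℕ) (v : V) : Finset V :=
  univ.filter fun u => u ≠ v ∧ commonNbrs G u v = b

/-- `A(v)`: the set of vertices `u ≠ v` having exactly `a` common neighbours with `v`. -/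
def dezaA {V : Type u} [Fintype V] [DecidableEq V] (G : SimpleGraph V)
    [DecidableRel G.Adj] (a : ℕ) (v : V) : Finset V :=
  univ.filter fun u => u ≠ v ∧ commonNbrs G u v = a

/-- `B[v] = B(v) ∪ {v}`. -/
def dezaBc {V : Type u} [Fintype V] [DecidableEq V] (G : SimpleGraph V)
    [DecidableRel G.Adj] (b : ℕ) (v : V) : Finset V :=
  insert v (dezaB G b v)

/-- A vertex `v` is of type (A) if `B(v) ∩ N(v) = ∅`. -/
def IsTypeA {V : Type u} [Fintype V] [DecidableEq V] (G : SimpleGraph V)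
    [DecidableRel G.Adj] (b : ℕ) (v : V) : Prop :=
  dezaB G b v ∩ G.neighborFinset v = ∅

/-- A vertex `v` is of type (B) if `B(v) ⊆ N(v)`. -/
def IsTypeB {V : Type u} [Fintype V] [DecidableEq V] (G : SimpleGraph V)
    [DecidableRel G.Adj] (b : ℕ) (v : V) : Prop :=
  dezaB G b v ⊆ G.neighborFinset v

/-- A vertex `v` is of type (C) if `|B(v) ∩ N(v)| = 1`. -/
def IsTypeC {V : Type u} [Fintype V] [DecidableEq V] (G : SimpleGraph V)
    [DecidableRel G.Adj] (b : ℕ) (v : V) : Prop :=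
  (dezaB G b v ∩ G.neighborFinset v).card = 1

/-- A vertex `x` of type (A) is of type (A1) if there exists `y ∈ N(x)` with
`N(x) \ N(xᵢ) = {y}` for every `xᵢ ∈ B(x)`. -/
def IsTypeA1 {V : Type u} [Fintype V] [DecidableEq V] (G : SimpleGraph V)
    [DecidableRel G.Adj] (b : ℕ) (x : V) : Prop :=
  IsTypeA G b x ∧ ∃ y ∈ G.neighborFinset x,
    ∀ xi ∈ dezaB G b x, G.neighborFinset x \ G.neighborFinset xi = {y}

/-- A vertex `x` of type (A) is of type (A2) if there exists `z ∉ N[x]` with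
`N(xᵢ) \ N(x) = {z}` for every `xᵢ ∈ B(x)`. -/
def IsTypeA2 {V : Type u} [Fintype V] [DecidableEq V] (G : SimpleGraph V)
    [DecidableRel G.Adj] (b : ℕ) (x : V) : Prop :=
  IsTypeA G b x ∧ ∃ z ∉ insert x (G.neighborFinset x),
    ∀ xi ∈ dezaB G b x, G.neighborFinset xi \ G.neighborFinset x = {z}

/-- The complete multipartite graph with `m` parts of size `t`. -/
def completeMultipartiteGr (m t : ℕ) : SimpleGraph (Fin m × Fin t) where
  Adj u v := u.1 ≠ v.1
  symm := ⟨fun _ _ h => Ne.symm h⟩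
  loopless := ⟨fun _ h => h rfl⟩

/-- The 2-clique extension of a graph `H`: vertices `(u, i)` and `(v, j)` are adjacent
iff `u ~ v` in `H`, or `u = v` and `i ≠ j`. -/
def cliqueExt2 {W : Type v} (H : SimpleGraph W) : SimpleGraph (W × Fin 2) where
  Adj u v := H.Adj u.1 v.1 ∨ (u.1 = v.1 ∧ u.2 ≠ v.2)
  symm := by
    constructor
    intro u v h
    rcases h with h | ⟨h1, h2⟩
    · exact Or.inl h.symm
    · exact Or.inr ⟨h1.symm, h2.symm⟩
  loopless := by
    constructor
    intro u h
    rcases h with h | ⟨_, h2⟩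
    · exact H.irrefl h
    · exact h2 rfl

section proof17

variable {V : Type u} [Fintype V] [DecidableEq V] (G : SimpleGraph V) [DecidableRel G.Adj]

/-- closed neighbourhood -/
def clN17 (v : V) : Finset V := insert v (G.neighborFinset v)

variable {G}

lemma mem_clN17 {u v : V} : u ∈ clN17 G v ↔ u = v ∨ G.Adj v u := by
  simp [clN17]

lemma adj_of_clN17 {u v : V} (h : clN17 G u = clN17 G v) (hne : u ≠ v) : G.Adj v u := by
  have hu : u ∈ clN17 G u := by simp [clN17]
  rw [h] at hu
  rcases mem_clN17.mp hu with rfl | h'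
  · exact absurd rfl hne
  · exact h'

lemma commonNbrs_comm (u v : V) : commonNbrs G u v = commonNbrs G v u := by
  rw [commonNbrs, commonNbrs, Finset.inter_comm]

lemma key_iff17 {k b : ℕ} (hreg : G.IsRegularOfDegree k) (hk : k = b + 1)
    (htypeB : ∀ x : V, IsTypeB G b x) {u v : V} (hne : u ≠ v) :
    commonNbrs G u v = b ↔ clN17 G u = clN17 G v := by
  constructor
  · intro h
    have huB : u ∈ dezaB G b v := by
      simp only [dezaB, Finset.mem_filter, Finset.mem_univ, true_and]
      exact ⟨hne, h⟩
    have hadj : G.Adj v u := (G.mem_neighborFinset v u).mp (htypeB v huB)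
    have hvNu : v ∈ G.neighborFinset u := by
      rw [G.mem_neighborFinset]; exact hadj.symm
    have huNv : u ∈ G.neighborFinset v := by
      rw [G.mem_neighborFinset]; exact hadj
    have e1 : G.neighborFinset u ∩ G.neighborFinset v = (G.neighborFinset u).erase v := by
      apply Finset.eq_of_subset_of_card_le
      · intro w hw
        rw [Finset.mem_inter] at hw
        refine Finset.mem_erase.mpr ⟨?_, hw.1⟩
        rintro rfl
        exact G.notMem_neighborFinset_self w hw.2
      · have hcU : #(G.neighborFinset u) = k := hreg u
        rw [Finset.card_erase_of_mem hvNu, hcU]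
        have : commonNbrs G u v = b := h
        rw [commonNbrs] at this
        omega
    have e2 : G.neighborFinset u ∩ G.neighborFinset v = (G.neighborFinset v).erase u := by
      apply Finset.eq_of_subset_of_card_le
      · intro w hw
        rw [Finset.mem_inter] at hw
        refine Finset.mem_erase.mpr ⟨?_, hw.2⟩
        rintro rfl
        exact G.notMem_neighborFinset_self w hw.1
      · have hcV : #(G.neighborFinset v) = k := hreg v
        rw [Finset.card_erase_of_mem huNv, hcV]
        have : commonNbrs G u v = b := h
        rw [commonNbrs] at this
        omega
    unfold clN17
    rw [← Finset.insert_erase hvNu, ← Finset.insert_erase huNv, ← e1, ← e2]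
    exact Finset.insert_comm u v _
  · intro h
    have hadj : G.Adj v u := adj_of_clN17 h hne
    have huNv : u ∈ G.neighborFinset v := by rw [G.mem_neighborFinset]; exact hadj
    have e2 : G.neighborFinset u ∩ G.neighborFinset v = (G.neighborFinset v).erase u := by
      ext w
      rw [Finset.mem_inter, Finset.mem_erase]
      constructor
      · rintro ⟨hw1, hw2⟩
        refine ⟨?_, hw2⟩
        rintro rfl
        exact G.notMem_neighborFinset_self w hw1
      · rintro ⟨hwu, hw⟩
        refine ⟨?_, hw⟩
        have : w ∈ clN17 G v := Finset.mem_insert_of_mem hw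
        rw [← h] at this
        rcases mem_clN17.mp this with rfl | h'
        · exact absurd rfl hwu
        · rw [G.mem_neighborFinset]; exact h'
    have hcV : #(G.neighborFinset v) = k := hreg v
    rw [commonNbrs, e2, Finset.card_erase_of_mem huNv, hcV, hk]
    omega


lemma sum_commonNbrs17 {k : ℕ} (hreg : G.IsRegularOfDegree k) (v : V) :
    ∑ u ∈ univ.erase v, commonNbrs G u v = k * (k - 1) := by
  have h1 : ∀ u : V, commonNbrs G u v
      = ∑ w ∈ G.neighborFinset v, if G.Adj u w then 1 else 0 := by
    intro u
    rw [commonNbrs, ← Finset.card_filter]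
    congr 1
    ext w
    simp only [Finset.mem_inter, Finset.mem_filter, SimpleGraph.mem_neighborFinset]
    tauto
  calc ∑ u ∈ univ.erase v, commonNbrs G u v
      = ∑ u ∈ univ.erase v, ∑ w ∈ G.neighborFinset v, if G.Adj u w then 1 else 0 :=
        Finset.sum_congr rfl fun u _ => h1 u
    _ = ∑ w ∈ G.neighborFinset v, ∑ u ∈ univ.erase v, if G.Adj u w then 1 else 0 :=
        Finset.sum_comm
    _ = ∑ _w ∈ G.neighborFinset v, (k - 1) := by
        apply Finset.sum_congr rfl
        intro w hw
        rw [← Finset.card_filter]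
        have heq : (univ.erase v).filter (fun u => G.Adj u w) = (G.neighborFinset w).erase v := by
          ext u
          simp only [Finset.mem_erase, Finset.mem_filter, Finset.mem_univ, true_and,
            SimpleGraph.mem_neighborFinset, and_true]
          constructor
          · rintro ⟨h1, h2⟩; exact ⟨h1, h2.symm⟩
          · rintro ⟨h1, h2⟩; exact ⟨h1, h2.symm⟩
        rw [heq, Finset.card_erase_of_mem, show #(G.neighborFinset w) = k from hreg w]
        rw [G.mem_neighborFinset]
        exact ((G.mem_neighborFinset v w).mp hw).symm
    _ = k * (k - 1) := by
        rw [Finset.sum_const, smul_eq_mul, show #(G.neighborFinset v) = k from hreg v]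

lemma split17 {n k b a : ℕ} (hreg : G.IsRegularOfDegree k) (hn : Fintype.card V = n)
    (hdeza : ∀ x y : V, x ≠ y → commonNbrs G x y = b ∨ commonNbrs G x y = a) (v : V) :
    k * (k - 1) = b * (dezaB G b v).card + a * ((n - 1) - (dezaB G b v).card) := by
  have hE : (univ.erase v).card = n - 1 := by
    rw [Finset.card_erase_of_mem (Finset.mem_univ v), Finset.card_univ, hn]
  have hfil : (univ.erase v).filter (fun u => commonNbrs G u v = b) = dezaB G b v := by
    ext u
    simp only [Finset.mem_filter, Finset.mem_erase, Finset.mem_univ, true_and, and_true,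
      dezaB]
  have hsplitcard := Finset.card_filter_add_card_filter_not
    (s := univ.erase v) (p := fun u => commonNbrs G u v = b)
  rw [hfil, hE] at hsplitcard
  have hsum := sum_commonNbrs17 hreg v
  rw [← Finset.sum_filter_add_sum_filter_not (univ.erase v)
    (fun u => commonNbrs G u v = b)] at hsum
  have hb : ∑ u ∈ (univ.erase v).filter (fun u => commonNbrs G u v = b), commonNbrs G u v
      = b * (dezaB G b v).card := by
    rw [Finset.sum_congr rfl (fun u hu => (Finset.mem_filter.mp hu).2), Finset.sum_const,
      smul_eq_mul, hfil, Nat.mul_comm]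
  have ha : ∑ u ∈ (univ.erase v).filter (fun u => ¬ commonNbrs G u v = b), commonNbrs G u v
      = a * ((n - 1) - (dezaB G b v).card) := by
    have hterm : ∀ u ∈ (univ.erase v).filter (fun u => ¬ commonNbrs G u v = b),
        commonNbrs G u v = a := by
      intro u hu
      rw [Finset.mem_filter, Finset.mem_erase] at hu
      rcases hdeza u v hu.1.1 with h | h
      · exact absurd h hu.2
      · exact h
    rw [Finset.sum_congr rfl hterm, Finset.sum_const, smul_eq_mul, Nat.mul_comm]
    congr 1
    omega
  rw [hb, ha] at hsum
  omega

lemma beta_const17 {n k b a : ℕ} (hreg : G.IsRegularOfDegree k) (hn : Fintype.card V = n)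
    (hdeza : ∀ x y : V, x ≠ y → commonNbrs G x y = b ∨ commonNbrs G x y = a)
    (hab : a < b) (v w : V) : (dezaB G b v).card = (dezaB G b w).card := by
  have h1 := split17 hreg hn hdeza (a := a) v
  have h2 := split17 hreg hn hdeza (a := a) w
  have hle1 : (dezaB G b v).card ≤ n - 1 := by
    have : dezaB G b v ⊆ univ.erase v := by
      intro u hu
      simp only [dezaB, Finset.mem_filter] at hu
      exact Finset.mem_erase.mpr ⟨hu.2.1, Finset.mem_univ u⟩
    calc (dezaB G b v).card ≤ (univ.erase v).card := Finset.card_le_card this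
      _ = n - 1 := by rw [Finset.card_erase_of_mem (Finset.mem_univ v), Finset.card_univ, hn]
  have hle2 : (dezaB G b w).card ≤ n - 1 := by
    have : dezaB G b w ⊆ univ.erase w := by
      intro u hu
      simp only [dezaB, Finset.mem_filter] at hu
      exact Finset.mem_erase.mpr ⟨hu.2.1, Finset.mem_univ u⟩
    calc (dezaB G b w).card ≤ (univ.erase w).card := Finset.card_le_card this
      _ = n - 1 := by rw [Finset.card_erase_of_mem (Finset.mem_univ w), Finset.card_univ, hn]
  have heq : b * (dezaB G b v).card + a * ((n-1) - (dezaB G b v).card)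
      = b * (dezaB G b w).card + a * ((n-1) - (dezaB G b w).card) := by omega
  zify [hle1, hle2] at heq
  have hz : ((b : ℤ) - a) * (dezaB G b v).card = ((b : ℤ) - a) * (dezaB G b w).card := by
    ring_nf
    ring_nf at heq
    linarith
  have hba : ((b : ℤ) - a) ≠ 0 := by
    have : (a : ℤ) < b := by exact_mod_cast hab
    omega
  exact_mod_cast mul_left_cancel₀ hba hz

lemma dvd_union_classes17 {c : ℕ}
    (hcard : ∀ v : V, ((univ : Finset V).filter fun u => clN17 G u = clN17 G v).card = c)
    (S : Finset V) (hS : ∀ z ∈ S, ∀ z', clN17 G z' = clN17 G z → z' ∈ S) : c ∣ S.card := by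
  classical
  rw [Finset.card_eq_sum_card_fiberwise
    (f := fun z => clN17 G z) (t := S.image (fun z => clN17 G z))
    (fun x hx => Finset.mem_image_of_mem _ hx)]
  have hfib : ∀ w ∈ S.image (fun z => clN17 G z),
      (S.filter fun z => clN17 G z = w).card = c := by
    intro w hw
    obtain ⟨z, hz, rfl⟩ := Finset.mem_image.mp hw
    have : S.filter (fun u => clN17 G u = clN17 G z)
        = univ.filter fun u => clN17 G u = clN17 G z := by
      ext u
      simp only [Finset.mem_filter, Finset.mem_univ, true_and]
      exact ⟨fun h => h.2, fun h => ⟨hS z hz u h, h⟩⟩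
    rw [this, hcard z]
  rw [Finset.sum_congr rfl hfib, Finset.sum_const, smul_eq_mul]
  exact Dvd.intro_left _ rfl


lemma card_commonNeighbors17 (x y : V) :
    Fintype.card (G.commonNeighbors x y) = commonNbrs G x y := by
  rw [commonNbrs, ← Set.toFinset_card]
  congr 1
  ext w
  rw [Set.mem_toFinset]
  simp [SimpleGraph.commonNeighbors]

end proof17

theorem stmt17' {V : Type u} [Fintype V] [DecidableEq V] (G : SimpleGraph V)
    [DecidableRel G.Adj] (n k b a : ℕ) :
    ¬ (((G ≠ ⊥ ∧ Fintype.card V = n ∧ G.IsRegularOfDegree k ∧ a ≤ b ∧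
        ∀ x y : V, x ≠ y → commonNbrs G x y = b ∨ commonNbrs G x y = a) ∧
        G.Connected ∧ (∀ x y : V, G.dist x y ≤ 2) ∧
        (∃ x y : V, G.dist x y = 2) ∧ ¬ ∃ ℓ μ : ℕ, G.IsSRGWith n k ℓ μ) ∧ k = b + 1 ∧
        (∀ v : V, 1 < (dezaB G b v).card) ∧
        ∀ x : V, IsTypeB G b x) := by
  rintro ⟨⟨⟨hbot, hcard, hreg, hba, hdeza⟩, hconn, hdiam, ⟨x0, y0, hdist⟩, hnsrg⟩, hk, hbeta, htypeB⟩
  rcases hba.lt_or_eq with hab | rfl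
  · -- main case a < b
    have key : ∀ u v : V, u ≠ v → (commonNbrs G u v = b ↔ clN17 G u = clN17 G v) :=
      fun u v hne => key_iff17 hreg hk htypeB hne
    set c := (dezaB G b x0).card + 1 with hc
    have hbconst : ∀ v : V, (dezaB G b v).card = c - 1 := by
      intro v
      rw [beta_const17 hreg hcard hdeza hab v x0]
      omega
    have hclass : ∀ v : V, ((univ : Finset V).filter fun u => clN17 G u = clN17 G v).card = c := by
      intro v
      have heq : ((univ : Finset V).filter fun u => clN17 G u = clN17 G v)
          = insert v (dezaB G b v) := by
        ext u
        simp only [Finset.mem_filter, Finset.mem_univ, true_and, Finset.mem_insert, dezaB]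
        constructor
        · intro h
          rcases eq_or_ne u v with rfl | hne
          · exact Or.inl rfl
          · exact Or.inr ⟨hne, (key u v hne).mpr h⟩
        · rintro (rfl | ⟨hne, hcom⟩)
          · rfl
          · exact (key u v hne).mp hcom
      rw [heq, Finset.card_insert_of_notMem, hbconst v]
      · omega
      · simp [dezaB]
    have hc3 : 3 ≤ c := by
      have := hbeta x0
      omega
    -- distance-2 pair
    have hxy_ne : x0 ≠ y0 := by
      rintro rfl
      rw [SimpleGraph.dist_self] at hdist
      omega
    have hnadj : ¬ G.Adj x0 y0 := by
      intro h
      rw [← SimpleGraph.dist_eq_one_iff_adj] at h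
      omega
    obtain ⟨p, hp⟩ := hconn.exists_walk_length_eq_dist x0 y0
    rw [hdist] at hp
    cases p with
    | nil => simp at hp
    | cons hadj1 q =>
      cases q with
      | nil => simp at hp
      | cons hadj2 r =>
        cases r with
        | cons h3 r' => simp [SimpleGraph.Walk.length_cons] at hp
        | nil =>
          -- hadj1 : G.Adj x0 z, hadj2 : G.Adj z y0
          rename_i z
          clear hp
          have hclxy : clN17 G x0 ≠ clN17 G y0 := by
            intro h
            exact hnadj (adj_of_clN17 h hxy_ne).symm
          have hclxz : clN17 G z ≠ clN17 G x0 := by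
            intro h
            have hy : y0 ∈ clN17 G z := mem_clN17.mpr (Or.inr hadj2)
            rw [h] at hy
            rcases mem_clN17.mp hy with rfl | hh
            · exact hxy_ne rfl
            · exact hnadj hh
          have hxz_ne : x0 ≠ z := G.ne_of_adj hadj1
          have ha1 : commonNbrs G x0 y0 = a := by
            rcases hdeza x0 y0 hxy_ne with h | h
            · exact absurd ((key x0 y0 hxy_ne).mp h) hclxy
            · exact h
          have ha2 : commonNbrs G x0 z = a := by
            rcases hdeza x0 z hxz_ne with h | h
            · exact absurd ((key x0 z hxz_ne).mp h).symm hclxz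
            · exact h
          -- c divides a
          have hdvd_a : c ∣ a := by
            rw [← ha1, commonNbrs]
            apply dvd_union_classes17 hclass
            intro w hw w' hww'
            rw [Finset.mem_inter] at hw ⊢
            have hadjx : G.Adj x0 w := (G.mem_neighborFinset x0 w).mp hw.1
            have hadjy : G.Adj y0 w := (G.mem_neighborFinset y0 w).mp hw.2
            have hclwx : clN17 G w ≠ clN17 G x0 := by
              intro h
              have hy : y0 ∈ clN17 G w := mem_clN17.mpr (Or.inr hadjy.symm)
              rw [h] at hy
              rcases mem_clN17.mp hy with rfl | hh
              · exact hxy_ne rfl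
              · exact hnadj hh
            have hclwy : clN17 G w ≠ clN17 G y0 := by
              intro h
              have hx : x0 ∈ clN17 G w := mem_clN17.mpr (Or.inr hadjx.symm)
              rw [h] at hx
              rcases mem_clN17.mp hx with rfl | hh
              · exact hxy_ne rfl
              · exact hnadj hh.symm
            constructor
            · have hx : x0 ∈ clN17 G w' := by
                rw [hww']
                exact mem_clN17.mpr (Or.inr hadjx.symm)
              rcases mem_clN17.mp hx with rfl | hh
              · exact absurd hww' (by rw [hww'] at hclwx; exact absurd rfl hclwx)
              · rw [G.mem_neighborFinset]; exact hh.symm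
            · have hy : y0 ∈ clN17 G w' := by
                rw [hww']
                exact mem_clN17.mpr (Or.inr hadjy.symm)
              rcases mem_clN17.mp hy with rfl | hh
              · exact absurd hww' (by rw [hww'] at hclwy; exact absurd rfl hclwy)
              · rw [G.mem_neighborFinset]; exact hh.symm
          -- decompose N(x0) ∩ N(z)
          set S2 := G.neighborFinset x0 ∩ G.neighborFinset z with hS2
          set T := S2.filter (fun u => clN17 G u ≠ clN17 G x0 ∧ clN17 G u ≠ clN17 G z) with hT
          have hdvd_T : c ∣ T.card := by
            apply dvd_union_classes17 hclass
            intro w hw w' hww'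
            rw [hT, Finset.mem_filter, Finset.mem_inter] at hw
            obtain ⟨⟨hw1, hw2⟩, hne1, hne2⟩ := hw
            have hadjx : G.Adj x0 w := (G.mem_neighborFinset x0 w).mp hw1
            have hadjz : G.Adj z w := (G.mem_neighborFinset z w).mp hw2
            rw [hT, Finset.mem_filter, Finset.mem_inter]
            refine ⟨⟨?_, ?_⟩, ?_, ?_⟩
            · have hx : x0 ∈ clN17 G w' := by
                rw [hww']
                exact mem_clN17.mpr (Or.inr hadjx.symm)
              rcases mem_clN17.mp hx with rfl | hh
              · rw [hww'] at hne1; exact absurd rfl hne1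
              · rw [G.mem_neighborFinset]; exact hh.symm
            · have hz' : z ∈ clN17 G w' := by
                rw [hww']
                exact mem_clN17.mpr (Or.inr hadjz.symm)
              rcases mem_clN17.mp hz' with rfl | hh
              · rw [hww'] at hne2; exact absurd rfl hne2
              · rw [G.mem_neighborFinset]; exact hh.symm
            · rw [hww']; exact hne1
            · rw [hww']; exact hne2
          have hsplitcard := Finset.card_filter_add_card_filter_not
            (s := S2) (p := fun u => clN17 G u ≠ clN17 G x0 ∧ clN17 G u ≠ clN17 G z)
          have hS2card : S2.card = a := by rw [← ha2]; rfl
          have hR : S2.filter (fun u =>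
              ¬ (clN17 G u ≠ clN17 G x0 ∧ clN17 G u ≠ clN17 G z))
              = (((univ : Finset V).filter fun u => clN17 G u = clN17 G x0).erase x0)
                ∪ (((univ : Finset V).filter fun u => clN17 G u = clN17 G z).erase z) := by
            ext u
            simp only [Finset.mem_filter, Finset.mem_union, Finset.mem_erase, Finset.mem_univ,
              true_and, not_and_or, not_not, hS2, Finset.mem_inter,
              SimpleGraph.mem_neighborFinset]
            constructor
            · rintro ⟨⟨hu1, hu2⟩, h | h⟩
              · exact Or.inl ⟨G.ne_of_adj hu1.symm, h⟩
              · exact Or.inr ⟨G.ne_of_adj hu2.symm, h⟩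
            · rintro (⟨hne, hcl⟩ | ⟨hne, hcl⟩)
              · refine ⟨⟨adj_of_clN17 hcl hne, ?_⟩, Or.inl hcl⟩
                have hz' : z ∈ clN17 G u := by
                  rw [hcl]
                  exact mem_clN17.mpr (Or.inr hadj1)
                rcases mem_clN17.mp hz' with rfl | hh
                · rw [hcl] at hclxz; exact absurd rfl hclxz
                · exact hh.symm
              · refine ⟨⟨?_, adj_of_clN17 hcl hne⟩, Or.inr hcl⟩
                have hx : x0 ∈ clN17 G u := by
                  rw [hcl]
                  exact mem_clN17.mpr (Or.inr hadj1.symm)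
                rcases mem_clN17.mp hx with rfl | hh
                · rw [hcl] at hclxz; exact absurd rfl hclxz
                · exact hh.symm
          have hRcard : (S2.filter (fun u =>
              ¬ (clN17 G u ≠ clN17 G x0 ∧ clN17 G u ≠ clN17 G z))).card = 2 * (c - 1) := by
            rw [hR, Finset.card_union_of_disjoint, Finset.card_erase_of_mem,
              Finset.card_erase_of_mem, hclass x0, hclass z]
            · omega
            · simp only [Finset.mem_filter, Finset.mem_univ, true_and]
            · simp only [Finset.mem_filter, Finset.mem_univ, true_and]
            · rw [Finset.disjoint_left]
              intro u hu hu'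
              rw [Finset.mem_erase, Finset.mem_filter] at hu hu'
              rw [← hu.2.2] at hclxz
              exact hclxz hu'.2.2.symm
          rw [hRcard, hS2card, ← hT] at hsplitcard
          -- now : T.card + 2*(c-1) = a, c ∣ T.card, c ∣ a, c ≥ 3
          have h2 : c ∣ 2 * (c - 1) := by
            have : 2 * (c - 1) = a - T.card := by omega
            rw [this]
            exact Nat.dvd_sub hdvd_a hdvd_T
          have h3 : c ∣ 2 := by
            have h2c : c ∣ 2 * c := ⟨2, by ring⟩
            have heq2 : 2 * c - 2 * (c - 1) = 2 := by omega
            rw [← heq2]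
            exact Nat.dvd_sub h2c h2
          have := Nat.le_of_dvd (by norm_num) h3
          omega
  · -- case a = b : strongly regular, contradiction
    apply hnsrg
    refine ⟨a, a, hcard, hreg, ?_, ?_⟩
    · intro v w h
      rw [card_commonNeighbors17]
      rcases hdeza v w (G.ne_of_adj h) with h' | h' <;> exact h'
    · intro v w hne h
      rw [card_commonNeighbors17]
      rcases hdeza v w hne with h' | h' <;> exact h'

theorem stmt17 {V : Type u} [Fintype V] [DecidableEq V] (G : SimpleGraph V)
    [DecidableRel G.Adj] (n k b a : ℕ) :
    ¬ (IsStrictlyDezaGraph G n k b a ∧ k = b + 1 ∧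
        (∀ v : V, 1 < (dezaB G b v).card) ∧
        ∀ x : V, IsTypeB G b x) := by
  intro h
  exact stmt17' G n k b a h
end

section
/- Let Γ be a strictly Deza graph with parameters (n, k, b, a) with k = b + 1 and β(v) > 1 for every vertex v. If every vertex of Γ is of type (C), then Γ is isomorphic to the 2-clique extension of the complete multipartite graph with n/(n − k + 1) parts of size (n − k + 1)/2. -/
open Finset SimpleGraph

universe u v

lemma dvd_card_of_closed {V : Type u} [Fintype V] [DecidableEq V]
    (R : V → V → Prop) [DecidableRel R]
    (hrefl : ∀ x, R x x)
    (hsymm : ∀ x y, R x y → R y x) (htrans : ∀ x y z, R x y → R y z → R x z)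
    (s : ℕ) (hcard : ∀ x, (univ.filter (R x)).card = s)
    (T : Finset V) (hT : ∀ x ∈ T, ∀ y, R x y → y ∈ T) : s ∣ T.card := by
  induction T using Finset.strongInduction with
  | _ T ih =>
    rcases T.eq_empty_or_nonempty with rfl | ⟨x, hx⟩
    · simp
    · have hcls : univ.filter (R x) ⊆ T := fun y hy => hT x hx y (by simpa using hy)
      have hxm : x ∈ univ.filter (R x) := by simp [hrefl x]
      have hsub : T \ univ.filter (R x) ⊂ T :=
        Finset.sdiff_ssubset hcls ⟨x, hxm⟩
      have hclosed : ∀ y ∈ T \ univ.filter (R x), ∀ z, R y z → z ∈ T \ univ.filter (R x) := by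
        intro y hy z hyz
        rw [mem_sdiff] at hy ⊢
        refine ⟨hT y hy.1 z hyz, fun hz => hy.2 ?_⟩
        simp only [mem_filter, mem_univ, true_and] at hz ⊢
        exact htrans x z y hz (hsymm y z hyz)
      have hdvd := ih _ hsub hclosed
      have hcardT : T.card = (T \ univ.filter (R x)).card + s := by
        rw [Finset.card_sdiff_of_subset hcls, hcard x]
        have h2 : s ≤ T.card := hcard x ▸ Finset.card_le_card hcls
        omega
      rw [hcardT]
      exact Nat.dvd_add hdvd dvd_rfl

lemma quot_mk_eq_iff {V : Type u} (S : Setoid V) (x y : V) :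
    Quotient.mk S x = Quotient.mk S y ↔ S.r x y :=
  ⟨Quotient.exact, Quotient.sound⟩

lemma commonNbrs_comm_s19 {V : Type u} [Fintype V] [DecidableEq V] (G : SimpleGraph V)
    [DecidableRel G.Adj] (x y : V) : commonNbrs G x y = commonNbrs G y x := by
  rw [commonNbrs, commonNbrs, Finset.inter_comm]

lemma commonNbrs_eq_card {V : Type u} [Fintype V] [DecidableEq V] (G : SimpleGraph V)
    [DecidableRel G.Adj] (x y : V) : commonNbrs G x y = Fintype.card (G.commonNeighbors x y) := by
  rw [commonNbrs, ← Set.toFinset_card]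
  congr 1
  ext w
  simp [SimpleGraph.mem_commonNeighbors]


theorem stmt19 {V : Type u} [Fintype V] [DecidableEq V] (G : SimpleGraph V)
    [DecidableRel G.Adj] (n k b a : ℕ)
    (hG : IsStrictlyDezaGraph G n k b a) (hk : k = b + 1)
    (hβ : ∀ v : V, 1 < (dezaB G b v).card)
    (hC : ∀ x : V, IsTypeC G b x) :
    Nonempty (G ≃g cliqueExt2
      (completeMultipartiteGr (n / (n - k + 1)) ((n - k + 1) / 2))) := by
  classical
  obtain ⟨⟨hne, hn, hreg, hab, hval⟩, hconn, hdiam, hdist2, hnsrg⟩ := hG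
  subst hk
  have hdeg : ∀ v : V, (G.neighborFinset v).card = b + 1 := fun v => hreg v
  -- a < b
  have hba : a < b := by
    refine lt_of_le_of_ne hab ?_
    intro h
    refine hnsrg ⟨b, b, hn, hreg, ?_, ?_⟩
    · intro v w hadj
      rw [← commonNbrs_eq_card]
      rcases hval v w (G.ne_of_adj hadj) with h' | h'
      · exact h'
      · rw [h', h]
    · intro v w hvw _
      rw [← commonNbrs_eq_card]
      rcases hval v w hvw with h' | h'
      · exact h'
      · rw [h', h]
  have hself : ∀ x : V, commonNbrs G x x = b + 1 := by
    intro x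
    rw [commonNbrs, Finset.inter_self, hdeg]
  have hRneq : ∀ x y : V, commonNbrs G x y = b → x ≠ y := by
    rintro x y hc rfl
    rw [hself] at hc
    omega
  -- the twin map σ
  have hsig : ∀ v, ∃ u, dezaB G b v ∩ G.neighborFinset v = {u} :=
    fun v => Finset.card_eq_one.mp (hC v)
  choose σ hσ using hsig
  have hσmemI : ∀ v, σ v ∈ dezaB G b v ∩ G.neighborFinset v := by
    intro v; rw [hσ v]; exact Finset.mem_singleton_self _
  have hσN : ∀ v, σ v ∈ G.neighborFinset v := fun v => (Finset.mem_inter.mp (hσmemI v)).2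
  have hσadj : ∀ v, G.Adj v (σ v) := fun v => (SimpleGraph.mem_neighborFinset G v (σ v)).mp (hσN v)
  have hσb : ∀ v, commonNbrs G (σ v) v = b := by
    intro v
    have h := (Finset.mem_inter.mp (hσmemI v)).1
    exact (Finset.mem_filter.mp h).2.2
  have hσne : ∀ v, σ v ≠ v := fun v => (G.ne_of_adj (hσadj v)).symm
  have huniq : ∀ v u, u ∈ G.neighborFinset v → commonNbrs G u v = b → u = σ v := by
    intro v u huN hcom
    have hu : u ∈ dezaB G b v ∩ G.neighborFinset v := by
      refine Finset.mem_inter.mpr ⟨Finset.mem_filter.mpr ⟨Finset.mem_univ _, ?_, hcom⟩, huN⟩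
      exact (G.ne_of_adj ((SimpleGraph.mem_neighborFinset G v u).mp huN)).symm
    rw [hσ v] at hu
    exact Finset.mem_singleton.mp hu
  have hσσ : ∀ v, σ (σ v) = v := by
    intro v
    refine (huniq (σ v) v ?_ ?_).symm
    · exact (SimpleGraph.mem_neighborFinset G (σ v) v).mpr (hσadj v).symm
    · rw [commonNbrs_comm_s19]; exact hσb v
  -- closed neighbourhood of the twin
  have hNσ : ∀ v, G.neighborFinset (σ v) = insert v ((G.neighborFinset v).erase (σ v)) := by
    intro v
    have hint : G.neighborFinset (σ v) ∩ G.neighborFinset v = (G.neighborFinset v).erase (σ v) := by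
      apply Finset.eq_of_subset_of_card_le
      · intro w hw
        rw [Finset.mem_inter] at hw
        refine Finset.mem_erase.mpr ⟨?_, hw.2⟩
        intro hws
        rw [hws] at hw
        exact G.irrefl ((SimpleGraph.mem_neighborFinset G (σ v) (σ v)).mp hw.1)
      · have h1 : ((G.neighborFinset v).erase (σ v)).card = b := by
          rw [Finset.card_erase_of_mem (hσN v), hdeg]
          omega
        have h2 : (G.neighborFinset (σ v) ∩ G.neighborFinset v).card = b := hσb v
        omega
    apply (Finset.eq_of_subset_of_card_le ?_ ?_).symm
    · intro w hw
      rcases Finset.mem_insert.mp hw with hw1 | hw2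
      · rw [hw1]
        exact (SimpleGraph.mem_neighborFinset G (σ v) v).mpr (hσadj v).symm
      · rw [← hint] at hw2; exact (Finset.mem_inter.mp hw2).1
    · have h1 : ((G.neighborFinset v).erase (σ v)).card = b := by
        rw [Finset.card_erase_of_mem (hσN v), hdeg]
        omega
      have h2 : v ∉ (G.neighborFinset v).erase (σ v) := by
        intro h
        exact G.irrefl ((SimpleGraph.mem_neighborFinset G v v).mp (Finset.mem_of_mem_erase h))
      rw [Finset.card_insert_of_notMem h2, h1, hdeg]
  have hσnotN : ∀ v x : V, x ≠ v → commonNbrs G x v = b → σ x ∉ G.neighborFinset v := by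
    intro v x hxv hcom h
    have hv : v ∈ G.neighborFinset (σ x) :=
      (SimpleGraph.mem_neighborFinset G (σ x) v).mpr ((SimpleGraph.mem_neighborFinset G v (σ x)).mp h).symm
    rw [hNσ x, Finset.mem_insert] at hv
    rcases hv with rfl | hv
    · exact hxv rfl
    · have hxNv : x ∈ G.neighborFinset v := by
        rw [SimpleGraph.mem_neighborFinset]
        exact ((SimpleGraph.mem_neighborFinset G x v).mp (Finset.mem_of_mem_erase hv)).symm
      have := huniq v x hxNv hcom
      subst this
      rw [hσσ] at h
      exact G.irrefl ((SimpleGraph.mem_neighborFinset G v v).mp h)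
  -- the class relation
  let R : V → V → Prop := fun x y => x = y ∨ commonNbrs G x y = b
  letI : DecidableRel R := fun x y => Classical.dec _
  have hRrefl : ∀ x, R x x := fun x => Or.inl rfl
  have hRsymm : ∀ x y, R x y → R y x := by
    rintro x y (rfl | h)
    · exact Or.inl rfl
    · exact Or.inr (by rw [commonNbrs_comm_s19]; exact h)
  -- key structure lemma
  have hkey : ∀ v x, R v x →
      G.neighborFinset x = insert (σ x) ((G.neighborFinset v).erase (σ v)) := by
    rintro v x (rfl | hb')
    · exact (Finset.insert_erase (hσN v)).symm
    · have hvx : v ≠ x := hRneq v x hb'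
      have hbx : commonNbrs G x v = b := by rw [commonNbrs_comm_s19]; exact hb'
      by_cases hxN : x ∈ G.neighborFinset v
      · have hx : x = σ v := huniq v x hxN hbx
        subst hx
        rw [hσσ]
        exact hNσ v
      · have hσvnx : σ v ∉ G.neighborFinset x := hσnotN x v hvx hb'
        have hσxnv : σ x ∉ G.neighborFinset v := hσnotN v x (Ne.symm hvx) hbx
        have hint : G.neighborFinset x ∩ G.neighborFinset v = (G.neighborFinset v).erase (σ v) := by
          apply Finset.eq_of_subset_of_card_le
          · intro w hw
            rw [Finset.mem_inter] at hw
            refine Finset.mem_erase.mpr ⟨?_, hw.2⟩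
            intro hws
            rw [hws] at hw
            exact hσvnx hw.1
          · have h1 : ((G.neighborFinset v).erase (σ v)).card = b := by
              rw [Finset.card_erase_of_mem (hσN v), hdeg]
              omega
            have h2 : (G.neighborFinset x ∩ G.neighborFinset v).card = b := hbx
            omega
        apply (Finset.eq_of_subset_of_card_le ?_ ?_).symm
        · intro w hw
          rcases Finset.mem_insert.mp hw with hw1 | hw2
          · rw [hw1]; exact hσN x
          · rw [← hint] at hw2; exact (Finset.mem_inter.mp hw2).1
        · have h1 : ((G.neighborFinset v).erase (σ v)).card = b := by
            rw [Finset.card_erase_of_mem (hσN v), hdeg]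
            omega
          have h2 : σ x ∉ (G.neighborFinset v).erase (σ v) := fun h =>
            hσxnv (Finset.mem_of_mem_erase h)
          rw [Finset.card_insert_of_notMem h2, h1, hdeg]
  have hRσ : ∀ x, R x (σ x) := fun x =>
    Or.inr (by rw [commonNbrs_comm_s19]; exact hσb x)
  have hRtrans : ∀ x y z, R x y → R y z → R x z := by
    intro x y z hxy hyz
    rcases hxy with rfl | hxy
    · exact hyz
    rcases hyz with rfl | hyz
    · exact Or.inr hxy
    by_cases hxz : x = z
    · exact Or.inl hxz
    refine Or.inr ?_
    have hyx : R y x := Or.inr (by rw [commonNbrs_comm_s19]; exact hxy)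
    have hNx := hkey y x hyx
    have hNz := hkey y z (Or.inr hyz)
    have hσxσz : σ x ≠ σ z := by
      intro h
      exact hxz (by rw [← hσσ x, h, hσσ])
    have hσxny : σ x ∉ G.neighborFinset y := hσnotN y x (hRneq x y hxy) hxy
    have hσzny : σ z ∉ G.neighborFinset y := hσnotN y z (Ne.symm (hRneq y z hyz)) (by rw [commonNbrs_comm_s19]; exact hyz)
    have hEq : G.neighborFinset x ∩ G.neighborFinset z = (G.neighborFinset y).erase (σ y) := by
      rw [hNx, hNz]
      ext w
      simp only [Finset.mem_inter, Finset.mem_insert]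
      constructor
      · rintro ⟨h1 | h1, h2 | h2⟩
        · exact absurd (h1.symm.trans h2) hσxσz
        · exact absurd (h1 ▸ Finset.mem_of_mem_erase h2) hσxny
        · exact absurd (h2 ▸ Finset.mem_of_mem_erase h1) hσzny
        · exact h1
      · intro h
        exact ⟨Or.inr h, Or.inr h⟩
    show commonNbrs G x z = b
    rw [commonNbrs, hEq, Finset.card_erase_of_mem (hσN y), hdeg]
    omega
  -- adjacency is class-invariant across classes
  have hAdj1 : ∀ v x y, R v x → ¬ R v y → (G.Adj x y ↔ G.Adj v y) := by
    intro v x y hvx hvy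
    have h1 : G.Adj x y ↔ y ∈ (G.neighborFinset v).erase (σ v) := by
      rw [← SimpleGraph.mem_neighborFinset, hkey v x hvx, Finset.mem_insert]
      constructor
      · rintro (h | h)
        · exact absurd (hRtrans v x y hvx (h ▸ hRσ x)) hvy
        · exact h
      · exact Or.inr
    have h2 : G.Adj v y ↔ y ∈ (G.neighborFinset v).erase (σ v) := by
      rw [Finset.mem_erase, ← SimpleGraph.mem_neighborFinset]
      constructor
      · intro h
        refine ⟨fun he => hvy (he ▸ hRσ v), h⟩
      · exact fun h => h.2
    rw [h1, h2]
  have hAdjInv : ∀ v w x y, R v x → R w y → ¬ R v w → (G.Adj x y ↔ G.Adj v w) := by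
    intro v w x y hvx hwy hvw
    have hvy : ¬ R v y := fun h => hvw (hRtrans v y w h (hRsymm w y hwy))
    have hwv : ¬ R w v := fun h => hvw (hRsymm w v h)
    rw [hAdj1 v x y hvx hvy, adj_comm, hAdj1 w y v hwy hwv, adj_comm]
  -- counting: all classes have the same size
  have hpath : ∀ v : V, ∑ u ∈ univ.erase v, commonNbrs G v u = (b+1) * b := by
    intro v
    have step1 : ∀ u : V, commonNbrs G v u =
        ∑ w ∈ G.neighborFinset v, if w ∈ G.neighborFinset u then 1 else 0 := by
      intro u
      rw [commonNbrs, ← Finset.filter_mem_eq_inter, Finset.card_filter]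
    calc ∑ u ∈ univ.erase v, commonNbrs G v u
        = ∑ u ∈ univ.erase v, ∑ w ∈ G.neighborFinset v,
            if w ∈ G.neighborFinset u then 1 else 0 :=
          Finset.sum_congr rfl (fun u _ => step1 u)
      _ = ∑ w ∈ G.neighborFinset v, ∑ u ∈ univ.erase v,
            if w ∈ G.neighborFinset u then 1 else 0 := Finset.sum_comm
      _ = ∑ _w ∈ G.neighborFinset v, b := by
          refine Finset.sum_congr rfl fun w hw => ?_
          rw [← Finset.card_filter]
          have hfe : (univ.erase v).filter (fun u => w ∈ G.neighborFinset u)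
              = (G.neighborFinset w).erase v := by
            ext u
            simp only [Finset.mem_filter, Finset.mem_erase, Finset.mem_univ, true_and,
              SimpleGraph.mem_neighborFinset]
            rw [adj_comm]
            tauto
          rw [hfe, Finset.card_erase_of_mem, hdeg]
          · omega
          · rw [SimpleGraph.mem_neighborFinset]
            exact ((SimpleGraph.mem_neighborFinset G v w).mp hw).symm
      _ = (b+1) * b := by rw [Finset.sum_const, hdeg, smul_eq_mul]
  have hfil : ∀ v : V, (univ.erase v).filter (fun u => commonNbrs G v u = b) = dezaB G b v := by
    intro v
    ext u
    simp only [Finset.mem_filter, Finset.mem_erase, Finset.mem_univ, true_and, dezaB,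
      and_true]
    constructor
    · rintro ⟨h1, h2⟩; exact ⟨h1, by rw [commonNbrs_comm_s19]; exact h2⟩
    · rintro ⟨h1, h2⟩; exact ⟨h1, by rw [commonNbrs_comm_s19]; exact h2⟩
  have hβle : ∀ v : V, (dezaB G b v).card ≤ n - 1 := by
    intro v
    have hsub : dezaB G b v ⊆ univ.erase v := by
      intro u hu
      exact Finset.mem_erase.mpr ⟨(Finset.mem_filter.mp hu).2.1, Finset.mem_univ u⟩
    have := Finset.card_le_card hsub
    rwa [Finset.card_erase_of_mem (Finset.mem_univ v), Finset.card_univ, hn] at this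
  have hform : ∀ v : V,
      (dezaB G b v).card * b + (n - 1 - (dezaB G b v).card) * a = (b+1)*b := by
    intro v
    rw [← hpath v,
      ← Finset.sum_filter_add_sum_filter_not (univ.erase v) (fun u => commonNbrs G v u = b)]
    have hc1 : ∑ u ∈ (univ.erase v).filter (fun u => commonNbrs G v u = b),
        commonNbrs G v u = (dezaB G b v).card * b := by
      rw [Finset.sum_congr rfl (fun u hu => (Finset.mem_filter.mp hu).2),
        Finset.sum_const, smul_eq_mul, hfil v]
    have hcards := Finset.card_filter_add_card_filter_not
      (s := univ.erase v) (p := fun u => commonNbrs G v u = b)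
    rw [hfil v, Finset.card_erase_of_mem (Finset.mem_univ v), Finset.card_univ, hn] at hcards
    have hc2 : ∑ u ∈ (univ.erase v).filter (fun u => ¬ commonNbrs G v u = b),
        commonNbrs G v u = (n - 1 - (dezaB G b v).card) * a := by
      have hval2 : ∀ u ∈ (univ.erase v).filter (fun u => ¬ commonNbrs G v u = b),
          commonNbrs G v u = a := by
        intro u hu
        rw [Finset.mem_filter, Finset.mem_erase] at hu
        rcases hval v u (Ne.symm hu.1.1) with h | h
        · exact absurd h hu.2
        · exact h
      rw [Finset.sum_congr rfl hval2, Finset.sum_const, smul_eq_mul]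
      congr 1
      omega
    rw [hc1, hc2]
  have hβconst : ∀ v w : V, (dezaB G b v).card = (dezaB G b w).card := by
    intro v w
    have h1 := hform v
    have h2 := hform w
    have hv := hβle v
    have hw := hβle w
    have hn1 : 1 ≤ n := by
      have hcv := Finset.card_pos.mpr ⟨v, Finset.mem_univ v⟩
      rw [Finset.card_univ, hn] at hcv
      omega
    zify [hv, hw, hn1] at h1 h2
    have key : (((dezaB G b v).card : ℤ) - (dezaB G b w).card) * ((b:ℤ) - a) = 0 := by
      linear_combination h1 - h2
    rcases mul_eq_zero.mp key with h | h
    · have : ((dezaB G b v).card : ℤ) = (dezaB G b w).card := by linarith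
      exact_mod_cast this
    · exfalso
      have : (a:ℤ) < b := by exact_mod_cast hba
      omega
  obtain ⟨x0, y0, -⟩ := hdist2
  set s0 := (dezaB G b x0).card + 1 with hs0def
  have hclsfil : ∀ v : V, univ.filter (R v) = insert v (dezaB G b v) := by
    intro v
    ext u
    simp only [Finset.mem_filter, Finset.mem_univ, true_and, Finset.mem_insert, dezaB]
    constructor
    · rintro (rfl | h)
      · exact Or.inl rfl
      · by_cases hu : u = v
        · exact Or.inl hu
        · exact Or.inr ⟨hu, by rw [commonNbrs_comm_s19]; exact h⟩
    · rintro (rfl | ⟨h1, h2⟩)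
      · exact Or.inl rfl
      · exact Or.inr (by rw [commonNbrs_comm_s19]; exact h2)
  have hvnB : ∀ v : V, v ∉ dezaB G b v := by
    intro v h
    exact (Finset.mem_filter.mp h).2.1 rfl
  have hsize : ∀ v : V, (univ.filter (R v)).card = s0 := by
    intro v
    rw [hclsfil v, Finset.card_insert_of_notMem (hvnB v), hβconst v x0]
  have hs3 : 3 ≤ s0 := by
    have := hβ x0
    omega
  have hnR : ∀ u z : V, z ∈ G.neighborFinset u → z ≠ σ u → ¬ R u z := by
    intro u z hz hzs hr
    rcases hr with rfl | hr
    · exact G.irrefl ((SimpleGraph.mem_neighborFinset G u u).mp hz)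
    · exact hzs (huniq u z hz (by rw [commonNbrs_comm_s19]; exact hr))
  have hnocross : ∀ v w : V, ¬ R v w → G.Adj v w := by
    have hcross : ∃ p q : V, G.Adj p q ∧ ¬ R p q := by
      by_contra h
      push_neg at h
      have hN1 : G.neighborFinset x0 = {σ x0} := by
        refine Finset.Subset.antisymm ?_ ?_
        · intro u hu
          have hadj := (SimpleGraph.mem_neighborFinset G x0 u).mp hu
          rcases h x0 u hadj with rfl | hr
          · exact absurd hadj G.irrefl
          · rw [Finset.mem_singleton]
            exact huniq x0 u hu (by rw [commonNbrs_comm_s19]; exact hr)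
        · intro u hu
          rw [Finset.mem_singleton] at hu
          rw [hu]
          exact hσN x0
      have : b + 1 = 1 := by rw [← hdeg x0, hN1, Finset.card_singleton]
      omega
    obtain ⟨p, q, hpq, hRpq⟩ := hcross
    have hpqne : p ≠ q := G.ne_of_adj hpq
    have hpqa : commonNbrs G p q = a := by
      rcases hval p q hpqne with h | h
      · exact absurd (Or.inr h) hRpq
      · exact h
    have hσpq : σ p ∈ G.neighborFinset q := by
      rw [SimpleGraph.mem_neighborFinset]
      exact (hAdjInv q p q (σ p) (hRrefl q) (hRσ p)
        (fun h => hRpq (hRsymm q p h))).mpr hpq.symm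
    have hσqp : σ q ∈ G.neighborFinset p := by
      rw [SimpleGraph.mem_neighborFinset]
      exact (hAdjInv p q p (σ q) (hRrefl p) (hRσ q) hRpq).mpr hpq
    have hσpσq : σ p ≠ σ q := fun h => hpqne (by rw [← hσσ p, h, hσσ])
    have hsub2 : ({σ p, σ q} : Finset V) ⊆ G.neighborFinset p ∩ G.neighborFinset q := by
      intro z hz
      rcases Finset.mem_insert.mp hz with rfl | hz
      · exact Finset.mem_inter.mpr ⟨hσN p, hσpq⟩
      · rw [Finset.mem_singleton] at hz
        rw [hz]
        exact Finset.mem_inter.mpr ⟨hσqp, hσN q⟩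
    have ha2 : 2 ≤ a := by
      have h1 := Finset.card_le_card hsub2
      rw [Finset.card_pair hσpσq] at h1
      rw [← hpqa]
      exact h1
    have hT2closed : ∀ z ∈ (G.neighborFinset p ∩ G.neighborFinset q) \ {σ p, σ q}, ∀ z',
        R z z' → z' ∈ (G.neighborFinset p ∩ G.neighborFinset q) \ {σ p, σ q} := by
      intro z hz z' hzz'
      rw [Finset.mem_sdiff, Finset.mem_inter] at hz
      obtain ⟨⟨hz1, hz2⟩, hz3⟩ := hz
      have hzσp : z ≠ σ p := fun h => hz3 (by rw [h]; exact Finset.mem_insert_self _ _)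
      have hzσq : z ≠ σ q := fun h => hz3 (by rw [h]; simp)
      have h1 : ¬ R p z := hnR p z hz1 hzσp
      have h2 : ¬ R q z := hnR q z hz2 hzσq
      rw [Finset.mem_sdiff, Finset.mem_inter]
      refine ⟨⟨?_, ?_⟩, ?_⟩
      · rw [SimpleGraph.mem_neighborFinset]
        exact (hAdjInv p z p z' (hRrefl p) hzz' h1).mpr
          ((SimpleGraph.mem_neighborFinset G p z).mp hz1)
      · rw [SimpleGraph.mem_neighborFinset]
        exact (hAdjInv q z q z' (hRrefl q) hzz' h2).mpr
          ((SimpleGraph.mem_neighborFinset G q z).mp hz2)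
      · intro hmem
        rcases Finset.mem_insert.mp hmem with h | h
        · exact h1 (hRsymm z p (hRtrans z (σ p) p (h ▸ hzz') (hRsymm p (σ p) (hRσ p))))
        · rw [Finset.mem_singleton] at h
          exact h2 (hRsymm z q (hRtrans z (σ q) q (h ▸ hzz') (hRsymm q (σ q) (hRσ q))))
    have hcard2 : ((G.neighborFinset p ∩ G.neighborFinset q) \ {σ p, σ q}).card = a - 2 := by
      rw [Finset.card_sdiff_of_subset hsub2, Finset.card_pair hσpσq]
      have hc : (G.neighborFinset p ∩ G.neighborFinset q).card = a := hpqa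
      rw [hc]
    have hdvd2 : s0 ∣ a - 2 := by
      rw [← hcard2]
      exact dvd_card_of_closed R hRrefl hRsymm hRtrans s0 hsize _ hT2closed
    intro v w hRvw
    by_contra hna
    have hvwne : v ≠ w := fun h => hRvw (Or.inl h)
    have hvwa : commonNbrs G v w = a := by
      rcases hval v w hvwne with h | h
      · exact absurd (Or.inr h) hRvw
      · exact h
    have hσvw : σ v ∉ G.neighborFinset w := by
      intro hmem
      have hw2 : w ∈ G.neighborFinset (σ v) :=
        (SimpleGraph.mem_neighborFinset G (σ v) w).mpr
          ((SimpleGraph.mem_neighborFinset G w (σ v)).mp hmem).symm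
      rw [hNσ v, Finset.mem_insert] at hw2
      rcases hw2 with h | h
      · exact hRvw (Or.inl h.symm)
      · exact hna ((SimpleGraph.mem_neighborFinset G v w).mp (Finset.mem_of_mem_erase h))
    have hσwv : σ w ∉ G.neighborFinset v := by
      intro hmem
      have hv2 : v ∈ G.neighborFinset (σ w) :=
        (SimpleGraph.mem_neighborFinset G (σ w) v).mpr
          ((SimpleGraph.mem_neighborFinset G v (σ w)).mp hmem).symm
      rw [hNσ w, Finset.mem_insert] at hv2
      rcases hv2 with h | h
      · exact hRvw (Or.inl h)
      · exact hna ((SimpleGraph.mem_neighborFinset G w v).mp (Finset.mem_of_mem_erase h)).symm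
    have hTclosed : ∀ z ∈ G.neighborFinset v ∩ G.neighborFinset w, ∀ z',
        R z z' → z' ∈ G.neighborFinset v ∩ G.neighborFinset w := by
      intro z hz z' hzz'
      rw [Finset.mem_inter] at hz ⊢
      have hzσv : z ≠ σ v := fun h => hσvw (h ▸ hz.2)
      have hzσw : z ≠ σ w := fun h => hσwv (h ▸ hz.1)
      have h1 : ¬ R v z := hnR v z hz.1 hzσv
      have h2 : ¬ R w z := hnR w z hz.2 hzσw
      constructor
      · rw [SimpleGraph.mem_neighborFinset]
        exact (hAdjInv v z v z' (hRrefl v) hzz' h1).mpr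
          ((SimpleGraph.mem_neighborFinset G v z).mp hz.1)
      · rw [SimpleGraph.mem_neighborFinset]
        exact (hAdjInv w z w z' (hRrefl w) hzz' h2).mpr
          ((SimpleGraph.mem_neighborFinset G w z).mp hz.2)
    have hdvd1 : s0 ∣ a := by
      rw [← hvwa]
      exact dvd_card_of_closed R hRrefl hRsymm hRtrans s0 hsize _ hTclosed
    have hs2 : s0 ∣ 2 := by
      have hd := Nat.dvd_sub hdvd1 hdvd2
      rwa [show a - (a - 2) = 2 from by omega] at hd
    have := Nat.le_of_dvd (by norm_num) hs2
    omega
  -- the size of a class is n - k + 1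
  have hintc : univ.filter (R x0) ∩ G.neighborFinset x0 = {σ x0} := by
    ext u
    simp only [Finset.mem_inter, Finset.mem_filter, Finset.mem_univ, true_and,
      Finset.mem_singleton]
    constructor
    · rintro ⟨hr, hN⟩
      rcases hr with rfl | hr
      · exact absurd ((SimpleGraph.mem_neighborFinset G _ _).mp hN) G.irrefl
      · exact huniq x0 u hN (by rw [commonNbrs_comm_s19]; exact hr)
    · rintro rfl
      exact ⟨hRσ x0, hσN x0⟩
  have hntot : n + 1 = s0 + (b + 1) := by
    have hu : univ.filter (R x0) ∪ G.neighborFinset x0 = univ := by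
      rw [Finset.eq_univ_iff_forall]
      intro u
      rw [Finset.mem_union]
      by_cases h : R x0 u
      · exact Or.inl (Finset.mem_filter.mpr ⟨Finset.mem_univ u, h⟩)
      · exact Or.inr ((SimpleGraph.mem_neighborFinset G x0 u).mpr (hnocross x0 u h))
    have hcui := Finset.card_union_add_card_inter (univ.filter (R x0)) (G.neighborFinset x0)
    rw [hu, hintc, hsize x0, hdeg x0, Finset.card_univ, hn, Finset.card_singleton] at hcui
    omega
  have hn0 : n = s0 + b := by omega
  have hnk : n - (b + 1) + 1 = s0 := by omega
  -- setoids and quotients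
  let S1 : Setoid V := ⟨R, ⟨fun x => hRrefl x, fun {x y} h => hRsymm x y h,
    fun {x y z} h h' => hRtrans x y z h h'⟩⟩
  let R2 : V → V → Prop := fun x y => x = y ∨ y = σ x
  have hR2refl : ∀ x, R2 x x := fun x => Or.inl rfl
  have hR2symm : ∀ x y, R2 x y → R2 y x := by
    rintro x y (rfl | h)
    · exact Or.inl rfl
    · exact Or.inr (by rw [h, hσσ])
  have hR2trans : ∀ x y z, R2 x y → R2 y z → R2 x z := by
    rintro x y z (rfl | h1) h2
    · exact h2
    · rcases h2 with rfl | h2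
      · exact Or.inr h1
      · refine Or.inl ?_
        rw [h2, h1, hσσ]
  let S2 : Setoid V := ⟨R2, ⟨fun x => hR2refl x, fun {x y} h => hR2symm x y h,
    fun {x y z} h h' => hR2trans x y z h h'⟩⟩
  have hR2R : ∀ x y, R2 x y → R x y := by
    rintro x y (rfl | h)
    · exact Or.inl rfl
    · rw [h]; exact hRσ x
  letI : DecidableEq (Quotient S1) := Classical.decEq _
  letI : DecidableEq (Quotient S2) := Classical.decEq _
  haveI : Fintype (Quotient S1) := Fintype.ofSurjective (Quotient.mk S1)
    (fun q => Quot.exists_rep q)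
  haveI : Fintype (Quotient S2) := Fintype.ofSurjective (Quotient.mk S2)
    (fun q => Quot.exists_rep q)
  let π : Quotient S2 → Quotient S1 :=
    Quotient.lift (Quotient.mk S1) (fun x y h => Quotient.sound (hR2R x y h))
  have hπ : ∀ x : V, π (Quotient.mk S2 x) = Quotient.mk S1 x := fun _ => rfl
  have hfib2fil : ∀ x : V,
      univ.filter (fun y => Quotient.mk S2 y = Quotient.mk S2 x) = {x, σ x} := by
    intro x
    ext y
    simp only [Finset.mem_filter, Finset.mem_univ, true_and, Finset.mem_insert,
      Finset.mem_singleton]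
    rw [quot_mk_eq_iff]
    show (y = x ∨ x = σ y) ↔ _
    constructor
    · rintro (rfl | h)
      · exact Or.inl rfl
      · exact Or.inr (by rw [h, hσσ])
    · rintro (rfl | h)
      · exact Or.inl rfl
      · exact Or.inr (by rw [h, hσσ])
  have hfil2card : ∀ x : V,
      (univ.filter (fun y => Quotient.mk S2 y = Quotient.mk S2 x)).card = 2 := by
    intro x
    rw [hfib2fil x]
    exact Finset.card_pair (Ne.symm (hσne x))
  have hfilS1 : ∀ v : V,
      univ.filter (fun x => Quotient.mk S1 x = Quotient.mk S1 v) = univ.filter (R v) := by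
    intro v
    ext x
    simp only [Finset.mem_filter, Finset.mem_univ, true_and]
    rw [quot_mk_eq_iff]
    exact ⟨fun h => hRsymm x v h, fun h => hRsymm v x h⟩
  have hQ2fib : ∀ q : Quotient S1,
      2 * (univ.filter (fun p : Quotient S2 => π p = q)).card = s0 := by
    intro q
    induction q using Quotient.ind with
    | _ v =>
      have hmain := Finset.card_eq_sum_card_fiberwise
        (s := univ.filter (fun x : V => Quotient.mk S1 x = Quotient.mk S1 v))
        (t := univ.filter (fun p : Quotient S2 => π p = Quotient.mk S1 v))
        (f := Quotient.mk S2) ?_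
      · have heach : ∀ p ∈ univ.filter (fun p : Quotient S2 => π p = Quotient.mk S1 v),
            ((univ.filter (fun x : V => Quotient.mk S1 x = Quotient.mk S1 v)).filter
              (fun x => Quotient.mk S2 x = p)).card = 2 := by
          intro p hp
          induction p using Quotient.ind with
          | _ z =>
            have hff : (univ.filter (fun x : V => Quotient.mk S1 x = Quotient.mk S1 v)).filter
                (fun x => Quotient.mk S2 x = Quotient.mk S2 z)
                = univ.filter (fun y : V => Quotient.mk S2 y = Quotient.mk S2 z) := by
              ext y
              simp only [Finset.mem_filter, Finset.mem_univ, true_and]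
              constructor
              · rintro ⟨h1, h2⟩
                exact h2
              · intro h2
                refine ⟨?_, h2⟩
                rw [← hπ y, h2]
                exact (Finset.mem_filter.mp hp).2
            rw [hff]
            exact hfil2card z
        rw [Finset.sum_congr rfl heach, Finset.sum_const, smul_eq_mul, hfilS1, hsize] at hmain
        omega
      · intro x hx
        rw [Finset.mem_coe, Finset.mem_filter] at hx
        rw [Finset.mem_coe, Finset.mem_filter]
        refine ⟨Finset.mem_univ _, ?_⟩
        rw [hπ x]
        exact hx.2
  have hQ1card : Fintype.card (Quotient S1) * s0 = n := by
    have hmain := Finset.card_eq_sum_card_fiberwise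
      (s := (univ : Finset V)) (t := (univ : Finset (Quotient S1)))
      (f := Quotient.mk S1) (fun x _ => Finset.mem_univ _)
    have heach : ∀ q ∈ (univ : Finset (Quotient S1)),
        ((univ : Finset V).filter (fun x => Quotient.mk S1 x = q)).card = s0 := by
      intro q _
      induction q using Quotient.ind with
      | _ v =>
        rw [hfilS1 v, hsize]
    rw [Finset.sum_congr rfl heach, Finset.sum_const, smul_eq_mul, Finset.card_univ, hn] at hmain
    rw [Finset.card_univ] at hmain
    omega
  have hm : Fintype.card (Quotient S1) = n / (n - (b+1) + 1) := by
    rw [hnk]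
    exact (Nat.div_eq_of_eq_mul_left (by omega) hQ1card.symm).symm
  have ht : ∀ q : Quotient S1,
      (univ.filter (fun p : Quotient S2 => π p = q)).card = (n - (b+1) + 1)/2 := by
    intro q
    have := hQ2fib q
    rw [hnk]
    omega
  have hfib2sub : ∀ p : Quotient S2, Fintype.card {x : V // Quotient.mk S2 x = p} = 2 := by
    intro p
    induction p using Quotient.ind with
    | _ x =>
      rw [Fintype.card_subtype]
      exact hfil2card x
  have htsub : ∀ q : Quotient S1,
      Fintype.card {p : Quotient S2 // π p = q} = (n - (b+1) + 1)/2 := by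
    intro q
    rw [Fintype.card_subtype]
    exact ht q
  let em : Quotient S1 ≃ Fin (n / (n - (b+1) + 1)) := Fintype.equivFinOfCardEq hm
  let et : ∀ q : Quotient S1, {p : Quotient S2 // π p = q} ≃ Fin ((n - (b+1) + 1)/2) :=
    fun q => Fintype.equivFinOfCardEq (htsub q)
  let e2 : ∀ p : Quotient S2, {x : V // Quotient.mk S2 x = p} ≃ Fin 2 :=
    fun p => Fintype.equivFinOfCardEq (hfib2sub p)
  let eQ2 : Quotient S2 ≃ (Fin (n / (n - (b+1) + 1)) × Fin ((n - (b+1) + 1)/2)) :=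
    (Equiv.sigmaFiberEquiv π).symm.trans ((Equiv.sigmaCongrRight et).trans
      ((Equiv.sigmaEquivProd _ _).trans (Equiv.prodCongr em (Equiv.refl _))))
  let eV : V ≃ (Quotient S2 × Fin 2) :=
    (Equiv.sigmaFiberEquiv (Quotient.mk S2)).symm.trans ((Equiv.sigmaCongrRight e2).trans
      (Equiv.sigmaEquivProd _ _))
  let e : V ≃ ((Fin (n / (n - (b+1) + 1)) × Fin ((n - (b+1) + 1)/2)) × Fin 2) :=
    eV.trans (Equiv.prodCongr eQ2 (Equiv.refl _))
  have he1 : ∀ x : V, (e x).1 = eQ2 (Quotient.mk S2 x) := fun x => rfl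
  have he11 : ∀ x : V, (e x).1.1 = em (Quotient.mk S1 x) := fun x => rfl
  have hiff1 : ∀ x y : V, ((e x).1.1 = (e y).1.1) ↔ R x y := by
    intro x y
    rw [he11 x, he11 y, Equiv.apply_eq_iff_eq, quot_mk_eq_iff]
    exact Iff.rfl
  have hiff2 : ∀ x y : V, ((e x).1 = (e y).1) ↔ R2 x y := by
    intro x y
    rw [he1 x, he1 y, Equiv.apply_eq_iff_eq, quot_mk_eq_iff]
    exact Iff.rfl
  refine ⟨⟨e, @fun x y => ?_⟩⟩
  show ((completeMultipartiteGr _ _).Adj (e x).1 (e y).1 ∨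
    ((e x).1 = (e y).1 ∧ (e x).2 ≠ (e y).2)) ↔ G.Adj x y
  show ((e x).1.1 ≠ (e y).1.1 ∨ ((e x).1 = (e y).1 ∧ (e x).2 ≠ (e y).2)) ↔ G.Adj x y
  constructor
  · rintro (h | ⟨h1, h2⟩)
    · exact hnocross x y (fun hr => h ((hiff1 x y).mpr hr))
    · have hr2 := (hiff2 x y).mp h1
      have hxy : x ≠ y := by
        rintro rfl
        exact h2 rfl
      rcases hr2 with h | h
      · exact absurd h hxy
      · rw [h]
        exact hσadj x
  · intro hadj
    by_cases hr : R x y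
    · right
      have hxy : x ≠ y := G.ne_of_adj hadj
      have hy : y = σ x := by
        rcases hr with h | h
        · exact absurd h hxy
        · exact huniq x y ((SimpleGraph.mem_neighborFinset G x y).mpr hadj)
            (by rw [commonNbrs_comm_s19]; exact h)
      refine ⟨(hiff2 x y).mpr (Or.inr hy), ?_⟩
      intro h2
      exact hxy (e.injective (Prod.ext ((hiff2 x y).mpr (Or.inr hy)) h2))
    · left
      exact fun h => hr ((hiff1 x y).mp h)
end
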